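/- Let k ≥ 1, n ≥ 1, and let ω = (ω₁, ω₂, …) be a sequence of integers. Let H₊ be the n×n Hessenberg matrix over ℤ[t₁,…,t_k] with entries (H₊)_{i,j} = t_{i−j+1} for 1 ≤ j ≤ i ≤ n−1, (H₊)_{i,i+1} = +1 for 1 ≤ i ≤ n−1, (H₊)_{n,j} = ω_{n−j+1}·t_{n−j+1} for 1 ≤ j ≤ n, and all other entries 0. Then perm H₊ = P_{ω,k,n}, where the permanent of an n×n matrix (a_{i,j}) is Σ_{σ ∈ Sₙ} Π_{i=1}^n a_{i,σ(i)}. -/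

import Mathlib

open Finset MvPolynomial

/-- The set of partitions `α ⊢ n` with parts at most `k`, encoded as tuples
`α = (α₁, …, α_k) ∈ ℕ^k` (0-indexed) with `∑ j, (j+1)·α_j = n`. -/
def partitions (k n : ℕ) : Finset (Fin k → ℕ) :=
  (Fintype.piFinset fun _ : Fin k => Finset.range (n + 1)).filter
    fun α => ∑ j : Fin k, (j.1 + 1) * α j = n

/-- The variable `t_{m+1}` of `ℚ[t₁,…,t_k]` (0-indexed), with the convention
`t_j = 0` for `j > k`. -/
noncomputable def tQ (k m : ℕ) : MvPolynomial (Fin k) ℚ :=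
  if h : m < k then X ⟨m, h⟩ else 0

/-- The weighted isobaric polynomial with weight vector `ω` (0-indexed, so
`ω 0 = ω₁`): `P_{ω,k,n} = ∑_{α ⊢ n} (|α|!/(α₁!⋯α_k!))·((∑ᵢ αᵢωᵢ)/|α|)·t^α`.
Its coefficients are integers; it is written here in `ℚ[t₁,…,t_k]`. -/
noncomputable def P (k : ℕ) (ω : ℕ → ℤ) (n : ℕ) : MvPolynomial (Fin k) ℚ :=
  ∑ α ∈ partitions k n,
    C ((Nat.multinomial Finset.univ α : ℚ) *
        ((∑ i : Fin k, (α i : ℚ) * (ω i.1 : ℚ)) / ((∑ i, α i : ℕ) : ℚ))) *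
      ∏ j, X j ^ α j

/-- The permanent of an `n×n` matrix: `∑_{σ ∈ Sₙ} ∏ᵢ a_{i,σ(i)}`. -/
noncomputable def perm {n : ℕ} {R : Type*} [CommRing R] (M : Matrix (Fin n) (Fin n) R) : R :=
  ∑ σ : Equiv.Perm (Fin n), ∏ i, M i (σ i)

/-- The `n×n` Hessenberg matrix `H₊` (0-indexed): rows `1 ≤ i ≤ n-1` (1-based)
have `t_{i-j+1}` for `j ≤ i` and `+1` on the superdiagonal; the last row has
entries `ω_{n-j+1}·t_{n-j+1}`; all other entries are `0`. -/
noncomputable def Hplus (k n : ℕ) (ω : ℕ → ℤ) :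
    Matrix (Fin n) (Fin n) (MvPolynomial (Fin k) ℚ) :=
  fun i j =>
    if i.1 = n - 1 then
      if j.1 ≤ i.1 then C ((ω (i.1 - j.1) : ℚ)) * tQ k (i.1 - j.1) else 0
    else if j.1 ≤ i.1 then tQ k (i.1 - j.1)
    else if j.1 = i.1 + 1 then 1
    else 0




lemma mem_partitions {k n : ℕ} {α : Fin k → ℕ} :
    α ∈ partitions k n ↔ ∑ j : Fin k, (j.1 + 1) * α j = n := by
  constructor
  · intro h; exact (Finset.mem_filter.mp h).2
  · intro h
    refine Finset.mem_filter.mpr ⟨Fintype.mem_piFinset.mpr fun i => ?_, h⟩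
    rw [Finset.mem_range, Nat.lt_succ_iff, ← h]
    calc α i ≤ (i.1 + 1) * α i := Nat.le_mul_of_pos_left _ (Nat.succ_pos _)
    _ ≤ ∑ j : Fin k, (j.1 + 1) * α j :=
        Finset.single_le_sum (f := fun j : Fin k => (j.1 + 1) * α j)
          (fun j _ => Nat.zero_le _) (Finset.mem_univ i)

-- sum/prod update helpers
lemma sum_weight_update {k : ℕ} (γ : Fin k → ℕ) (r : Fin k) (v : ℕ) :
    ∑ j : Fin k, (j.1 + 1) * Function.update γ r v j
      = (r.1 + 1) * v + ∑ j ∈ Finset.univ.erase r, (j.1 + 1) * γ j := by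
  simp only [Function.apply_update (fun (j : Fin k) (n : ℕ) => (j.1 + 1) * n) γ r v]
  rw [Finset.sum_update_of_mem (Finset.mem_univ r)]; simp [Finset.erase_eq]

lemma sum_update_split {k : ℕ} (γ : Fin k → ℕ) (r : Fin k) :
    ∑ j : Fin k, (j.1 + 1) * γ j
      = (r.1 + 1) * γ r + ∑ j ∈ Finset.univ.erase r, (j.1 + 1) * γ j := by
  exact (Finset.add_sum_erase _ _ (Finset.mem_univ r)).symm

lemma card_update {k : ℕ} (γ : Fin k → ℕ) (r : Fin k) (v : ℕ) :
    ∑ j : Fin k, Function.update γ r v j = v + ∑ j ∈ Finset.univ.erase r, γ j := by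
  rw [Finset.sum_update_of_mem (Finset.mem_univ r)]; simp [Finset.erase_eq]

lemma card_split {k : ℕ} (γ : Fin k → ℕ) (r : Fin k) :
    ∑ j : Fin k, γ j = γ r + ∑ j ∈ Finset.univ.erase r, γ j := by
  exact (Finset.add_sum_erase _ _ (Finset.mem_univ r)).symm

lemma multinomial_update {k : ℕ} (β : Fin k → ℕ) (r : Fin k) :
    Nat.multinomial Finset.univ (Function.update β r (β r + 1)) * (β r + 1)
      = Nat.multinomial Finset.univ β * ((∑ i, β i) + 1) := by
  have hprodu : ∏ i : Fin k, (Function.update β r (β r + 1) i).factorial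
      = (β r + 1) * ∏ i : Fin k, (β i).factorial := by
    simp only [Function.apply_update (fun (_ : Fin k) (n : ℕ) => n.factorial) β r (β r + 1)]
    rw [Finset.prod_update_of_mem (Finset.mem_univ r),
      ← Finset.mul_prod_erase _ _ (Finset.mem_univ r), Nat.factorial_succ, mul_assoc]
    simp [Finset.erase_eq]
  have hsumu : ∑ i : Fin k, Function.update β r (β r + 1) i = (∑ i, β i) + 1 := by
    rw [card_update, card_split β r]; omega
  have hu := Nat.multinomial_spec Finset.univ (Function.update β r (β r + 1))
  have hb := Nat.multinomial_spec Finset.univ β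
  rw [hsumu, hprodu] at hu
  have hpos : 0 < ∏ i : Fin k, (β i).factorial :=
    Finset.prod_pos fun i _ => Nat.factorial_pos _
  apply Nat.eq_of_mul_eq_mul_left hpos
  calc (∏ i : Fin k, (β i).factorial) *
        (Nat.multinomial Finset.univ (Function.update β r (β r + 1)) * (β r + 1))
      = ((β r + 1) * ∏ i : Fin k, (β i).factorial) *
          Nat.multinomial Finset.univ (Function.update β r (β r + 1)) := by ring
    _ = ((∑ i, β i) + 1).factorial := hu
    _ = ((∑ i, β i) + 1) * (∑ i, β i).factorial := Nat.factorial_succ _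
    _ = ((∑ i, β i) + 1) * ((∏ i : Fin k, (β i).factorial) * Nat.multinomial Finset.univ β) := by
          rw [hb]
    _ = (∏ i : Fin k, (β i).factorial) * (Nat.multinomial Finset.univ β * ((∑ i, β i) + 1)) := by
          ring

noncomputable def G (k m : ℕ) : MvPolynomial (Fin k) ℚ :=
  ∑ α ∈ partitions k m, C ((Nat.multinomial Finset.univ α : ℚ)) * ∏ j, X j ^ α j

lemma partitions_zero (k : ℕ) : partitions k 0 = {fun _ => 0} := by
  ext α
  rw [mem_partitions, Finset.mem_singleton]
  constructor
  · intro h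
    funext j
    have := Finset.sum_eq_zero_iff.mp h j (Finset.mem_univ j)
    rcases Nat.mul_eq_zero.mp this with h' | h'
    · omega
    · exact h'
  · intro h; subst h; simp

lemma G_zero (k : ℕ) : G k 0 = 1 := by
  rw [G, partitions_zero, Finset.sum_singleton]
  have h := Nat.multinomial_spec Finset.univ (fun _ : Fin k => 0)
  simp at h
  simp [h]

lemma term_eq (k : ℕ) (w : ℕ → ℚ) (r : Fin k) (β : Fin k → ℕ) :
    C ((Nat.multinomial Finset.univ (Function.update β r (β r + 1)) : ℚ)
        * ((Function.update β r (β r + 1)) r : ℚ) * w r.1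
        / ((∑ i, Function.update β r (β r + 1) i : ℕ) : ℚ)) *
      ∏ j, X j ^ (Function.update β r (β r + 1)) j
    = C (w r.1) * (X r * (C ((Nat.multinomial Finset.univ β : ℚ)) * ∏ j, X j ^ β j)) := by
  have h1 : (Function.update β r (β r + 1)) r = β r + 1 := Function.update_self _ _ _
  have h2 : ∑ i, Function.update β r (β r + 1) i = (∑ i, β i) + 1 := by
    rw [card_update, card_split β r]; omega
  have h3 : (∏ j, X j ^ (Function.update β r (β r + 1)) j : MvPolynomial (Fin k) ℚ)
      = X r * ∏ j, X j ^ β j := by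
    simp only [Function.apply_update (fun (j : Fin k) (n : ℕ) =>
      (X j ^ n : MvPolynomial (Fin k) ℚ)) β r (β r + 1)]
    rw [Finset.prod_update_of_mem (Finset.mem_univ r),
      ← Finset.mul_prod_erase Finset.univ (fun j => (X j ^ β j : MvPolynomial (Fin k) ℚ))
        (Finset.mem_univ r), pow_succ, Finset.erase_eq]
    ring
  have hm : (Nat.multinomial Finset.univ (Function.update β r (β r + 1)) : ℚ) * ((β r : ℚ) + 1)
      = (Nat.multinomial Finset.univ β : ℚ) * (((∑ i, β i : ℕ) : ℚ) + 1) := by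
    exact_mod_cast congrArg (Nat.cast : ℕ → ℚ) (multinomial_update β r)
  have hcoeff : (Nat.multinomial Finset.univ (Function.update β r (β r + 1)) : ℚ)
        * ((Function.update β r (β r + 1)) r : ℚ) * w r.1
        / ((∑ i, Function.update β r (β r + 1) i : ℕ) : ℚ)
      = w r.1 * (Nat.multinomial Finset.univ β : ℚ) := by
    rw [h1, h2]
    have hne : (∑ i : Fin k, (β i : ℚ)) + 1 ≠ 0 := by positivity
    push_cast at hm ⊢
    rw [div_eq_iff hne]
    linear_combination w r.1 * hm
  rw [hcoeff, h3, map_mul]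
  ring

lemma keyB (k m : ℕ) (w : ℕ → ℚ) (r : Fin k) :
    ∑ α ∈ partitions k (m+1),
        C ((Nat.multinomial Finset.univ α : ℚ) * (α r : ℚ) * w r.1 / ((∑ i, α i : ℕ) : ℚ)) *
          ∏ j, X j ^ α j
      = if r.1 ≤ m then C (w r.1) * (tQ k r.1 * G k (m - r.1)) else 0 := by
  rw [← Finset.sum_filter_of_ne (p := fun α => α r ≠ 0)
    (by intro α _ hne; intro h0; apply hne; simp [h0])]
  by_cases hr : r.1 ≤ m
  · rw [if_pos hr]
    have htQ : tQ k r.1 = X r := by rw [tQ, dif_pos r.isLt]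
    rw [htQ, G, Finset.mul_sum, Finset.mul_sum]
    refine (Finset.sum_nbij' (i := fun β => Function.update β r (β r + 1))
      (j := fun α => Function.update α r (α r - 1)) ?_ ?_ ?_ ?_ ?_).symm
    · -- maps partitions (m - r) into filter
      intro β hβ
      rw [mem_partitions] at hβ
      rw [Finset.mem_filter, mem_partitions]
      refine ⟨?_, by simp⟩
      rw [sum_weight_update]
      rw [sum_update_split β r] at hβ
      have hexp : (r.1 + 1) * (β r + 1) = (r.1 + 1) * β r + (r.1 + 1) := by ring
      omega
    · intro α hα
      rw [Finset.mem_filter, mem_partitions] at hα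
      rw [mem_partitions, sum_weight_update]
      obtain ⟨c, hc⟩ : ∃ c, α r = c + 1 := ⟨α r - 1, (Nat.succ_pred_eq_of_ne_zero hα.2).symm⟩
      have h1 := hα.1
      rw [sum_update_split α r, hc] at h1
      rw [hc]
      have hexp : (r.1 + 1) * (c + 1) = (r.1 + 1) * c + (r.1 + 1) := by ring
      have h2 : c + 1 - 1 = c := by omega
      rw [h2]
      omega
    · intro β hβ
      funext j
      by_cases hj : j = r
      · subst hj; simp
      · simp [Function.update_of_ne hj]
    · intro α hα
      rw [Finset.mem_filter] at hα
      funext j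
      by_cases hj : j = r
      · subst hj
        simp only [Function.update_self]
        have := hα.2
        omega
      · simp [Function.update_of_ne hj]
    · intro β hβ
      simpa using (term_eq k w r β).symm
  · rw [if_neg hr]
    apply Finset.sum_eq_zero
    intro α hα
    rw [Finset.mem_filter, mem_partitions] at hα
    exfalso
    have hle : (r.1 + 1) * α r ≤ m + 1 := by
      rw [← hα.1]
      exact Finset.single_le_sum (f := fun j : Fin k => (j.1 + 1) * α j)
        (fun j _ => Nat.zero_le _) (Finset.mem_univ r)
    have h1 : r.1 + 1 ≤ (r.1 + 1) * α r :=
      Nat.le_mul_of_pos_right _ (Nat.pos_of_ne_zero hα.2)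
    omega

lemma key (k m : ℕ) (w : ℕ → ℚ) :
    ∑ r ∈ Finset.range (m+1), C (w r) * (tQ k r * G k (m - r))
      = ∑ α ∈ partitions k (m+1),
          C ((Nat.multinomial Finset.univ α : ℚ) *
             ((∑ i : Fin k, (α i : ℚ) * w i.1) / ((∑ i, α i : ℕ) : ℚ))) * ∏ j, X j ^ α j := by
  have hA : ∀ α : Fin k → ℕ,
      C ((Nat.multinomial Finset.univ α : ℚ) *
          ((∑ i : Fin k, (α i : ℚ) * w i.1) / ((∑ i, α i : ℕ) : ℚ))) *
            (∏ j, X j ^ α j : MvPolynomial (Fin k) ℚ)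
        = ∑ r : Fin k,
            C ((Nat.multinomial Finset.univ α : ℚ) * (α r : ℚ) * w r.1 /
              ((∑ i, α i : ℕ) : ℚ)) * ∏ j, X j ^ α j := by
    intro α
    rw [show (Nat.multinomial Finset.univ α : ℚ) *
          ((∑ i : Fin k, (α i : ℚ) * w i.1) / ((∑ i, α i : ℕ) : ℚ))
        = ∑ r : Fin k, (Nat.multinomial Finset.univ α : ℚ) * (α r : ℚ) * w r.1 /
            ((∑ i, α i : ℕ) : ℚ) from by
      rw [Finset.sum_div, Finset.mul_sum]
      exact Finset.sum_congr rfl fun i _ => by ring]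
    rw [map_sum, Finset.sum_mul]
  rw [Finset.sum_congr rfl fun α _ => hA α, Finset.sum_comm]
  have hB : ∀ r : Fin k,
      ∑ α ∈ partitions k (m+1),
        C ((Nat.multinomial Finset.univ α : ℚ) * (α r : ℚ) * w r.1 / ((∑ i, α i : ℕ) : ℚ)) *
          ∏ j, X j ^ α j
      = if r.1 ≤ m then C (w r.1) * (tQ k r.1 * G k (m - r.1)) else 0 := keyB k m w
  rw [Finset.sum_congr rfl fun r _ => hB r]
  rw [Fin.sum_univ_eq_sum_range (fun r => if r ≤ m then C (w r) * (tQ k r * G k (m - r)) else 0) k]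
  rw [← Finset.sum_filter]
  have hset : (Finset.range k).filter (fun r => r ≤ m) = Finset.range (m+1) ∩ Finset.range k := by
    ext r
    simp [Nat.lt_succ_iff, and_comm]
  rw [hset]
  refine (Finset.sum_subset Finset.inter_subset_left ?_).symm
  intro r hr hnr
  have hk : ¬ r < k := by
    intro hlt
    exact hnr (Finset.mem_inter.mpr ⟨hr, Finset.mem_range.mpr hlt⟩)
  rw [tQ, dif_neg hk]
  simp


lemma perm_transpose {n : ℕ} {R : Type*} [CommRing R] (M : Matrix (Fin n) (Fin n) R) :
    perm M.transpose = perm M := by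
  unfold perm
  rw [← Equiv.sum_comp (Equiv.inv (Equiv.Perm (Fin n)))]
  refine Finset.sum_congr rfl fun σ _ => ?_
  rw [← Equiv.prod_comp σ]
  simp [Matrix.transpose_apply]

lemma perm_succ_row_zero {n : ℕ} {R : Type*} [CommRing R]
    (M : Matrix (Fin (n+1)) (Fin (n+1)) R) :
    perm M = ∑ j : Fin (n+1), M 0 j * perm (M.submatrix Fin.succ j.succAbove) := by
  rw [perm, Finset.univ_perm_fin_succ, ← Finset.univ_product_univ, Finset.sum_map,
    Finset.sum_product]
  simp only [Equiv.toEmbedding_apply]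
  refine Finset.sum_congr rfl fun p _ => ?_
  rw [perm, Finset.mul_sum]
  refine Fin.cases ?_ (fun i => ?_) p
  · refine Finset.sum_congr rfl fun e _ => ?_
    simp [Fin.prod_univ_succ, Matrix.submatrix_apply, Fin.succAbove_zero]
  · have key : ∀ e : Equiv.Perm (Fin n),
        ∏ x, M x (Equiv.Perm.decomposeFin.symm (i.succ, e) x)
          = M 0 i.succ *
            ∏ x, (M.submatrix Fin.succ i.succ.succAbove) x ((i.cycleRange * e) x) := by
      intro e
      rw [Fin.prod_univ_succ, Equiv.Perm.decomposeFin_symm_apply_zero]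
      congr 1
      refine Finset.prod_congr rfl fun x _ => ?_
      rw [Equiv.Perm.decomposeFin_symm_apply_succ, Matrix.submatrix_apply, Equiv.Perm.mul_apply,
        Fin.succAbove_cycleRange]
    simp_rw [key]
    exact Fintype.sum_bijective (fun e => i.cycleRange * e)
      (Group.mulLeft_bijective _) _ _ (fun e => rfl)

lemma perm_succ_column_zero {n : ℕ} {R : Type*} [CommRing R]
    (M : Matrix (Fin (n+1)) (Fin (n+1)) R) :
    perm M = ∑ i : Fin (n+1), M i 0 * perm (M.submatrix i.succAbove Fin.succ) := by
  rw [← perm_transpose M, perm_succ_row_zero]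
  refine Finset.sum_congr rfl fun i _ => ?_
  rw [← perm_transpose (M.submatrix i.succAbove Fin.succ)]
  rfl

lemma perm_zero {R : Type*} [CommRing R] (M : Matrix (Fin 0) (Fin 0) R) : perm M = 1 := by
  simp [perm]

lemma perm_reindex {n : ℕ} {R : Type*} [CommRing R] (e f : Equiv.Perm (Fin n))
    (M : Matrix (Fin n) (Fin n) R) : perm (M.submatrix e f) = perm M := by
  unfold perm
  refine Fintype.sum_bijective (fun σ => f * (σ * e⁻¹))
    ((Group.mulLeft_bijective f).comp (Group.mulRight_bijective e⁻¹)) _ _ fun σ => ?_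
  rw [← Equiv.prod_comp e (fun i => M i ((f * (σ * e⁻¹)) i))]
  refine Finset.prod_congr rfl fun i _ => ?_
  simp [Matrix.submatrix_apply, Equiv.Perm.mul_apply]

noncomputable def Amat (k s m : ℕ) : Matrix (Fin m) (Fin m) (MvPolynomial (Fin k) ℚ) :=
  fun i j =>
    if i.1 = 0 then tQ k (s + j.1)
    else if i.1 ≤ j.1 then tQ k (j.1 - i.1)
    else if i.1 = j.1 + 1 then 1 else 0

noncomputable def Wmat (k : ℕ) (ω : ℕ → ℤ) (s m : ℕ) :
    Matrix (Fin m) (Fin m) (MvPolynomial (Fin k) ℚ) :=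
  fun i j =>
    if i.1 = 0 then C ((ω (s + j.1) : ℚ)) * tQ k (s + j.1)
    else if i.1 ≤ j.1 then tQ k (j.1 - i.1)
    else if i.1 = j.1 + 1 then 1 else 0

lemma amat_sub0 (k s m : ℕ) :
    (Amat k s (m+1)).submatrix Fin.succ Fin.succ = Amat k 0 m := by
  funext i j
  simp only [Amat, Matrix.submatrix_apply, Fin.val_succ]
  split_ifs <;> (first | rfl | (exfalso; omega) | (congr 1 <;> (first | rfl | omega)) | exact False.elim (by assumption))

lemma wmat_sub0 (k : ℕ) (ω : ℕ → ℤ) (s m : ℕ) :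
    (Wmat k ω s (m+1)).submatrix Fin.succ Fin.succ = Amat k 0 m := by
  funext i j
  simp only [Wmat, Amat, Matrix.submatrix_apply, Fin.val_succ]
  split_ifs <;> (first | rfl | (exfalso; omega) | (congr 1 <;> (first | rfl | omega)) | exact False.elim (by assumption))

lemma amat_sub1 (k s m : ℕ) :
    (Amat k s (m+2)).submatrix ((1 : Fin (m+2)).succAbove) Fin.succ = Amat k (s+1) (m+1) := by
  funext i j
  refine Fin.cases ?_ (fun x => ?_) i
  · simp only [Matrix.submatrix_apply, Fin.one_succAbove_zero, Amat, Fin.val_zero, Fin.val_succ]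
    have h : s + (j.1 + 1) = s + 1 + j.1 := by omega
    rw [h]
    simp
  · simp only [Matrix.submatrix_apply, Fin.one_succAbove_succ, Amat, Fin.val_succ]
    split_ifs <;> (first | rfl | (exfalso; omega) | (congr 1 <;> (first | rfl | omega)) | exact False.elim (by assumption))

lemma wmat_sub1 (k : ℕ) (ω : ℕ → ℤ) (s m : ℕ) :
    (Wmat k ω s (m+2)).submatrix ((1 : Fin (m+2)).succAbove) Fin.succ = Wmat k ω (s+1) (m+1) := by
  funext i j
  refine Fin.cases ?_ (fun x => ?_) i
  · simp only [Matrix.submatrix_apply, Fin.one_succAbove_zero, Wmat, Fin.val_zero, Fin.val_succ]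
    have h : s + (j.1 + 1) = s + 1 + j.1 := by omega
    rw [h]
    simp
  · simp only [Matrix.submatrix_apply, Fin.one_succAbove_succ, Wmat, Fin.val_succ]
    split_ifs <;> (first | rfl | (exfalso; omega) | (congr 1 <;> (first | rfl | omega)) | exact False.elim (by assumption))

lemma perm_amat_one (k s : ℕ) : perm (Amat k s 1) = tQ k s := by
  rw [perm_succ_column_zero, Fin.sum_univ_one, perm_zero]
  simp [Amat]

lemma perm_wmat_one (k : ℕ) (ω : ℕ → ℤ) (s : ℕ) :
    perm (Wmat k ω s 1) = C ((ω s : ℚ)) * tQ k s := by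
  rw [perm_succ_column_zero, Fin.sum_univ_one, perm_zero]
  simp [Wmat]

lemma perm_amat_step (k s m : ℕ) :
    perm (Amat k s (m+2)) = tQ k s * perm (Amat k 0 (m+1)) + perm (Amat k (s+1) (m+1)) := by
  rw [perm_succ_column_zero, Fin.sum_univ_succ, Fin.sum_univ_succ]
  have e0 : Amat k s (m+2) 0 0 = tQ k s := by simp [Amat]
  have e1 : Amat k s (m+2) (Fin.succ 0) 0 = 1 := by
    simp only [Amat, Fin.val_succ, Fin.val_zero]
    norm_num
  have erest : ∀ x : Fin m, Amat k s (m+2) (Fin.succ (Fin.succ x)) 0 = 0 := by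
    intro x
    simp only [Amat, Fin.val_succ, Fin.val_zero]
    split_ifs <;> (first | rfl | (exfalso; omega) | exact False.elim (by assumption))
  rw [e0, e1, Fin.succAbove_zero, amat_sub0, Fin.succ_zero_eq_one, amat_sub1, one_mul]
  have hz : ∑ x : Fin m,
      Amat k s (m+2) (Fin.succ (Fin.succ x)) 0 *
        perm ((Amat k s (m+2)).submatrix (Fin.succ (Fin.succ x)).succAbove Fin.succ) = 0 := by
    apply Finset.sum_eq_zero
    intro x _
    rw [erest x, zero_mul]
  rw [hz, add_zero]

lemma perm_wmat_step (k : ℕ) (ω : ℕ → ℤ) (s m : ℕ) :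
    perm (Wmat k ω s (m+2))
      = C ((ω s : ℚ)) * tQ k s * perm (Amat k 0 (m+1)) + perm (Wmat k ω (s+1) (m+1)) := by
  rw [perm_succ_column_zero, Fin.sum_univ_succ, Fin.sum_univ_succ]
  have e0 : Wmat k ω s (m+2) 0 0 = C ((ω s : ℚ)) * tQ k s := by simp [Wmat]
  have e1 : Wmat k ω s (m+2) (Fin.succ 0) 0 = 1 := by
    simp only [Wmat, Fin.val_succ, Fin.val_zero]
    norm_num
  have erest : ∀ x : Fin m, Wmat k ω s (m+2) (Fin.succ (Fin.succ x)) 0 = 0 := by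
    intro x
    simp only [Wmat, Fin.val_succ, Fin.val_zero]
    split_ifs <;> (first | rfl | (exfalso; omega) | exact False.elim (by assumption))
  rw [e0, e1, Fin.succAbove_zero, wmat_sub0, Fin.succ_zero_eq_one, wmat_sub1, one_mul]
  have hz : ∑ x : Fin m,
      Wmat k ω s (m+2) (Fin.succ (Fin.succ x)) 0 *
        perm ((Wmat k ω s (m+2)).submatrix (Fin.succ (Fin.succ x)).succAbove Fin.succ) = 0 := by
    apply Finset.sum_eq_zero
    intro x _
    rw [erest x, zero_mul]
  rw [hz, add_zero]

lemma perm_amat_closed (k : ℕ) : ∀ m s, perm (Amat k s (m+1))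
    = ∑ r ∈ Finset.range (m+1), tQ k (s + r) * perm (Amat k 0 (m - r)) := by
  intro m
  induction m with
  | zero =>
    intro s
    rw [perm_amat_one, Finset.sum_range_one, Nat.sub_zero, perm_zero]
    simp
  | succ m ih =>
    intro s
    rw [perm_amat_step, ih (s+1)]
    conv_rhs => rw [Finset.sum_range_succ']
    rw [add_comm]
    congr 1
    · refine Finset.sum_congr rfl fun x _ => ?_
      have h1 : s + 1 + x = s + (x + 1) := by omega
      have h2 : m + 1 - (x + 1) = m - x := by omega
      rw [h1, h2]

lemma card_pos_of_mem_partitions {k m : ℕ} {α : Fin k → ℕ} (h : α ∈ partitions k (m+1)) :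
    0 < ∑ i, α i := by
  rw [mem_partitions] at h
  by_contra hle
  push_neg at hle
  have hz : ∀ i : Fin k, α i = 0 := by
    intro i
    have := Nat.le_zero.mp hle
    have h2 := Finset.sum_eq_zero_iff.mp this i (Finset.mem_univ i)
    exact h2
  rw [Finset.sum_eq_zero (fun j _ => by rw [hz j, Nat.mul_zero])] at h
  omega

lemma G_rec (k m : ℕ) :
    G k (m+1) = ∑ r ∈ Finset.range (m+1), tQ k r * G k (m - r) := by
  have h := key k m (fun _ => 1)
  simp only [map_one, one_mul] at h
  rw [h, G]
  refine Finset.sum_congr rfl fun α hα => ?_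
  have hpos := card_pos_of_mem_partitions hα
  have hne : ((∑ i, α i : ℕ) : ℚ) ≠ 0 := by positivity
  congr 1
  have hsum : (∑ i : Fin k, (α i : ℚ) * 1) = ((∑ i, α i : ℕ) : ℚ) := by
    push_cast
    simp
  rw [hsum, div_self hne, mul_one]

lemma perm_amat_eq_G (k : ℕ) : ∀ m, perm (Amat k 0 m) = G k m := by
  intro m
  induction m using Nat.strong_induction_on with
  | _ m ih =>
    match m with
    | 0 => rw [perm_zero, G_zero]
    | m + 1 =>
      have h := perm_amat_closed k m 0
      simp only [zero_add] at h
      rw [h, G_rec]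
      refine Finset.sum_congr rfl fun r hr => ?_
      rw [ih (m - r) (by omega)]

set_option maxHeartbeats 1000000 in
lemma perm_wmat_closed (k : ℕ) (ω : ℕ → ℤ) : ∀ m s, perm (Wmat k ω s (m+1))
    = ∑ r ∈ Finset.range (m+1), C ((ω (s + r) : ℚ)) * (tQ k (s + r) * G k (m - r)) := by
  intro m
  induction m with
  | zero =>
    intro s
    rw [perm_wmat_one, Finset.sum_range_one, Nat.sub_zero, G_zero]
    simp
  | succ m ih =>
    intro s
    rw [perm_wmat_step, ih (s+1), perm_amat_eq_G]
    conv_rhs => rw [Finset.sum_range_succ']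
    rw [add_comm, mul_assoc]
    congr 1
    · refine Finset.sum_congr rfl fun x _ => ?_
      have h1 : s + 1 + x = s + (x + 1) := by omega
      have h2 : m + 1 - (x + 1) = m - x := by omega
      rw [h1, h2]


lemma hplus_rev (k n : ℕ) (ω : ℕ → ℤ) (hn : 1 ≤ n) :
    (Hplus k n ω).submatrix (Fin.revPerm : Equiv.Perm (Fin n)) (Fin.revPerm : Equiv.Perm (Fin n))
      = Wmat k ω 0 n := by
  funext i j
  simp only [Hplus, Wmat, Matrix.submatrix_apply, Fin.revPerm_apply, Fin.val_rev, zero_add]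
  split_ifs <;> (first | rfl | (exfalso; omega) | (congr 1 <;> (first | rfl | omega | (congr 1 <;> (first | rfl | omega | (congr 1 <;> (first | rfl | omega | (congr 1 <;> (first | rfl | omega)))))))) | exact False.elim (by assumption))

theorem perm_Hplus_eq_P (k n : ℕ) (hk : 1 ≤ k) (hn : 1 ≤ n) (ω : ℕ → ℤ) :
    perm (Hplus k n ω) = P k ω n := by
  obtain ⟨m, rfl⟩ : ∃ m, n = m + 1 := ⟨n - 1, by omega⟩
  calc perm (Hplus k (m+1) ω) = perm (Wmat k ω 0 (m+1)) := by
        rw [← hplus_rev k (m+1) ω hn, perm_reindex]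
    _ = ∑ r ∈ Finset.range (m+1), C ((ω (0 + r) : ℚ)) * (tQ k (0 + r) * G k (m - r)) :=
        perm_wmat_closed k ω m 0
    _ = ∑ r ∈ Finset.range (m+1),
          C ((fun r => ((ω r : ℚ))) r) * (tQ k r * G k (m - r)) := by simp only [zero_add]
    _ = ∑ α ∈ partitions k (m+1),
          C ((Nat.multinomial Finset.univ α : ℚ) *
             ((∑ i : Fin k, (α i : ℚ) * (fun r => ((ω r : ℚ))) i.1) / ((∑ i, α i : ℕ) : ℚ))) *
            ∏ j, X j ^ α j := key k m (fun r => ((ω r : ℚ)))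
    _ = P k ω (m+1) := rfl
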